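/- Let n ≥ 2 and 1 ≤ r < n be integers and let h be a homeomorphism of 𝔠_{n,r} that preserves tail equivalence (x ∼ y iff h(x) ∼ h(y)). Then there exist words ν and η such that ν and η are incomparable, U_ν ∪ U_η ≠ 𝔠_{n,r}, and h acts in the same fashion on U_ν and U_η. -/

import Mathlib

open Set

namespace HigmanAut

/-- The one-sided infinite sequence space `𝔠_n` on `n` letters. -/
abbrev Cn (n : ℕ) : Type := ℕ → Fin n

/-- The Cantor space `𝔠_{n,r} = Fin r × (ℕ → Fin n)` (with the product topology,
`Fin r` and `Fin n` discrete). -/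
abbrev CNR (n r : ℕ) : Type := Fin r × Cn n

/-- A word: a letter from `Fin r` together with a finite list over `Fin n`. -/
abbrev Word (n r : ℕ) : Type := Fin r × List (Fin n)

/-- Self-homeomorphisms of `𝔠_{n,r}`. -/
abbrev Homeo (n r : ℕ) : Type := CNR n r ≃ₜ CNR n r

/-- Append a finite list to a word: `ν⌢w`. -/
def wApp {n r : ℕ} (ν : Word n r) (w : List (Fin n)) : Word n r := (ν.1, ν.2 ++ w)

/-- The point `ν⌢x` of `𝔠_{n,r}` determined by a word `ν` followed by `x ∈ 𝔠_n`. -/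
def wCat {n r : ℕ} (ν : Word n r) (x : Cn n) : CNR n r :=
  (ν.1, fun i => if h : i < ν.2.length then ν.2.get ⟨i, h⟩ else x (i - ν.2.length))

/-- The cone `U_ν` of a word `ν`. -/
def cone {n r : ℕ} (ν : Word n r) : Set (CNR n r) :=
  {p | p.1 = ν.1 ∧ ∀ (i : ℕ) (h : i < ν.2.length), p.2 i = ν.2.get ⟨i, h⟩}

/-- Membership in the Higman--Thompson group `G_{n,r}`: `g` is a prefix code map,
i.e. there are `k ≥ 1` and words `ν i`, `η i` whose cones partition `𝔠_{n,r}`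
with `g(ν i ⌢ x) = η i ⌢ x` for all `i`, `x`. -/
def IsHigman {n r : ℕ} (g : Homeo n r) : Prop :=
  ∃ k : ℕ, 0 < k ∧ ∃ ν η : Fin k → Word n r,
    (∀ p : CNR n r, ∃! i : Fin k, p ∈ cone (ν i)) ∧
    (∀ p : CNR n r, ∃! i : Fin k, p ∈ cone (η i)) ∧
    (∀ (i : Fin k) (x : Cn n), g (wCat (ν i) x) = wCat (η i) x)

/-- The Higman--Thompson group `G_{n,r}` as a set of homeomorphisms. -/
def higmanSet (n r : ℕ) : Set (Homeo n r) := {g | IsHigman g}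

/-- Conjugation: in the paper's right-action notation this is `g ↦ h⁻¹ g h`
(as a left function, `x ↦ h (g (h⁻¹ x))`). -/
def conjH {n r : ℕ} (h g : Homeo n r) : Homeo n r := (h.symm.trans g).trans h

/-- `h` acts in the same fashion on `U_α` and `U_β`: there are words `α'`, `β'`
and a common local action `f` with `h(α⌢x) = α'⌢f(x)` and `h(β⌢x) = β'⌢f(x)`. -/
def SameFashion {n r : ℕ} (h : Homeo n r) (α β : Word n r) : Prop :=
  ∃ (α' β' : Word n r) (f : Cn n → Cn n),
    (∀ x : Cn n, h (wCat α x) = wCat α' (f x)) ∧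
    (∀ x : Cn n, h (wCat β x) = wCat β' (f x))

/-- Tail equivalence on `𝔠_{n,r}`. -/
def TailEq {n r : ℕ} (x y : CNR n r) : Prop :=
  ∃ (ν η : Word n r) (z : Cn n), x = wCat ν z ∧ y = wCat η z

/-- `h` is pointwise canonical. -/
def PtwiseCanonical {n r : ℕ} (h : Homeo n r) : Prop :=
  ∀ x : CNR n r, ∃ (η₁ η₂ : Word n r) (y : Cn n), x = wCat η₁ y ∧ h x = wCat η₂ y

/-- `h` is densely canonical. -/
def DenselyCanonical {n r : ℕ} (h : Homeo n r) : Prop :=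
  ∀ U : Set (CNR n r), IsOpen U → U.Nonempty →
    ∃ η ζ : Word n r, cone η ⊆ U ∧ ∀ x : Cn n, h (wCat η x) = wCat ζ x

/-- `h` belongs to `H_{n,r,∼}`: `x ∼ y` iff `h(x) ∼ h(y)`. -/
def PreservesTailEq {n r : ℕ} (h : Homeo n r) : Prop :=
  ∀ x y : CNR n r, TailEq x y ↔ TailEq (h x) (h y)

/-- `ν` is a prefix of `η`, i.e. `U_η ⊆ U_ν`. -/
def WPrefix {n r : ℕ} (ν η : Word n r) : Prop := cone η ⊆ cone ν

/-- Two words are incomparable if neither is a prefix of the other. -/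
def Incomp {n r : ℕ} (ν η : Word n r) : Prop := ¬ WPrefix ν η ∧ ¬ WPrefix η ν

def listCat {n : ℕ} (w : List (Fin n)) (x : Cn n) : Cn n :=
  fun i => if h : i < w.length then w.get ⟨i, h⟩ else x (i - w.length)

lemma wCat_append {n r : ℕ} (c : Fin r) (u w : List (Fin n)) (z : Cn n) :
    wCat (c, u ++ w) z = wCat (c, u) (listCat w z) := by
  refine Prod.ext rfl ?_
  funext i
  simp only [wCat, listCat, List.length_append, List.get_eq_getElem]
  by_cases h1 : i < u.length
  · rw [dif_pos (by omega), dif_pos h1, List.getElem_append, dif_pos h1]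
  · by_cases h2 : i < u.length + w.length
    · rw [dif_pos h2, dif_neg h1, dif_pos (by omega), List.getElem_append, dif_neg h1]
    · rw [dif_neg h2, dif_neg h1, dif_neg (by omega)]
      congr 1; omega

lemma continuous_wCat {n r : ℕ} (ν : Word n r) : Continuous (fun x : Cn n => wCat ν x) := by
  refine Continuous.prodMk continuous_const (continuous_pi fun i => ?_)
  by_cases h : i < ν.2.length
  · simpa [h] using (continuous_const : Continuous fun _ : Cn n => ν.2.get ⟨i, h⟩)
  · simpa [h] using continuous_apply (i - ν.2.length)

lemma cyl_basis {n : ℕ} (U : Set (Cn n)) (hU : IsOpen U) (x : Cn n) (hx : x ∈ U) :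
    ∃ m : ℕ, ∀ y : Cn n, (∀ i < m, y i = x i) → y ∈ U := by
  have h1 : U ∈ nhds x := hU.mem_nhds hx
  rw [nhds_pi, Filter.mem_pi] at h1
  obtain ⟨I, hI, t, ht, hsub⟩ := h1
  obtain ⟨b, hb⟩ := hI.bddAbove
  refine ⟨b + 1, fun y hy => hsub fun i hi => ?_⟩
  have : y i = x i := hy i (by have := hb hi; omega)
  rw [this]
  exact mem_of_mem_nhds (ht i)

lemma wCat_mem_cone {n r : ℕ} (ν : Word n r) (x : Cn n) : wCat ν x ∈ cone ν :=
  ⟨rfl, fun i hlt => by simp [wCat, hlt]⟩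

/-- If `h` preserves tail equivalence then there are incomparable
words `ν`, `η` with `U_ν ∪ U_η ≠ 𝔠_{n,r}` on whose cones `h` acts in the same
fashion. -/
theorem preserves_tailEq_same_fashion_somewhere (n r : ℕ) (hn : 2 ≤ n)
    (hr1 : 1 ≤ r) (hrn : r < n) (h : Homeo n r) (hpres : PreservesTailEq h) :
    ∃ ν η : Word n r, Incomp ν η ∧ cone ν ∪ cone η ≠ Set.univ ∧
      SameFashion h ν η := by
  classical
  haveI : Nonempty (Fin n) := ⟨⟨0, by omega⟩⟩
  haveI : BaireSpace (Cn n) := BaireSpace.of_t2Space_locallyCompactSpace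
  set c₀ : Fin r := ⟨0, hr1⟩ with hc₀
  set z0 : Fin n := ⟨0, by omega⟩ with hz0
  set z1 : Fin n := ⟨1, by omega⟩ with hz1
  have hz01 : z0 ≠ z1 := by simp [hz0, hz1, Fin.ext_iff]
  set ν₀ : Word n r := (c₀, [z0]) with hν₀
  set η₀ : Word n r := (c₀, [z1]) with hη₀
  set F : Cn n → CNR n r := fun x => h (wCat ν₀ x) with hF
  set G : Cn n → CNR n r := fun x => h (wCat η₀ x) with hG
  have hFc : Continuous F := h.continuous.comp (continuous_wCat ν₀)
  have hGc : Continuous G := h.continuous.comp (continuous_wCat η₀)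
  set A : ℕ × ℕ → Set (Cn n) :=
    fun kl => {x | ∀ i, (F x).2 (kl.1 + i) = (G x).2 (kl.2 + i)} with hA
  have hAclosed : ∀ kl, IsClosed (A kl) := by
    intro kl
    have : A kl = ⋂ i, {x | (F x).2 (kl.1 + i) = (G x).2 (kl.2 + i)} := by
      ext x; simp [hA, Set.mem_iInter]
    rw [this]
    exact isClosed_iInter fun i =>
      isClosed_eq ((continuous_apply (kl.1 + i)).comp (continuous_snd.comp hFc))
        ((continuous_apply (kl.2 + i)).comp (continuous_snd.comp hGc))
  have hcover : ⋃ kl, A kl = univ := by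
    rw [Set.eq_univ_iff_forall]
    intro x
    have htx : TailEq (wCat ν₀ x) (wCat η₀ x) := ⟨ν₀, η₀, x, rfl, rfl⟩
    obtain ⟨μ, τ, zz, hF1, hG1⟩ := (hpres _ _).mp htx
    refine Set.mem_iUnion.mpr ⟨(μ.2.length, τ.2.length), fun i => ?_⟩
    have e1 : (F x).2 (μ.2.length + i) = zz i := by
      show (h (wCat ν₀ x)).2 _ = _
      rw [hF1]
      simp only [wCat]
      rw [dif_neg (by omega)]
      congr 1; omega
    have e2 : (G x).2 (τ.2.length + i) = zz i := by
      show (h (wCat η₀ x)).2 _ = _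
      rw [hG1]
      simp only [wCat]
      rw [dif_neg (by omega)]
      congr 1; omega
    exact e1.trans e2.symm
  obtain ⟨kl, x₁, hx₁⟩ := nonempty_interior_of_iUnion_of_closed hAclosed hcover
  obtain ⟨m₀, hm₀⟩ := cyl_basis _ isOpen_interior x₁ hx₁
  have hAmem : ∀ y : Cn n, (∀ i < m₀, y i = x₁ i) →
      ∀ i, (F y).2 (kl.1 + i) = (G y).2 (kl.2 + i) :=
    fun y hy => interior_subset (hm₀ y hy)
  set k := kl.1 with hk
  set l := kl.2 with hl
  -- local constancy of prefixes of F and G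
  set Φ : Cn n → Fin r × (Fin k → Fin n) := fun x => ((F x).1, fun j => (F x).2 j) with hΦ
  have hΦc : Continuous Φ :=
    (continuous_fst.comp hFc).prodMk
      (continuous_pi fun j => (continuous_apply (j : ℕ)).comp (continuous_snd.comp hFc))
  have hΦopen : IsOpen (Φ ⁻¹' {Φ x₁}) := (isOpen_discrete _).preimage hΦc
  obtain ⟨m₁, hm₁⟩ := cyl_basis _ hΦopen x₁ rfl
  set Ψ : Cn n → Fin r × (Fin l → Fin n) := fun x => ((G x).1, fun j => (G x).2 j) with hΨ
  have hΨc : Continuous Ψ :=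
    (continuous_fst.comp hGc).prodMk
      (continuous_pi fun j => (continuous_apply (j : ℕ)).comp (continuous_snd.comp hGc))
  have hΨopen : IsOpen (Ψ ⁻¹' {Ψ x₁}) := (isOpen_discrete _).preimage hΨc
  obtain ⟨m₂, hm₂⟩ := cyl_basis _ hΨopen x₁ rfl
  set M := max (max m₀ m₁) (max m₂ 1) with hM
  have hM0 : m₀ ≤ M := by omega
  have hM1 : m₁ ≤ M := by omega
  have hM2 : m₂ ≤ M := by omega
  have hM3 : 1 ≤ M := by omega
  set w : List (Fin n) := List.ofFn (fun i : Fin M => x₁ i) with hw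
  have hwlen : w.length = M := by simp [hw]
  have hagree : ∀ (z : Cn n) (i : ℕ), i < M → listCat w z i = x₁ i := by
    intro z i hi
    simp only [listCat, hwlen]
    rw [dif_pos hi]
    simp [hw]
  set νs : Word n r := (c₀, z0 :: w) with hνs
  set ηs : Word n r := (c₀, z1 :: w) with hηs
  set f : Cn n → Cn n := fun z i => (F (listCat w z)).2 (k + i) with hf
  set α : Word n r := ((F x₁).1, List.ofFn fun j : Fin k => (F x₁).2 j) with hα
  set β : Word n r := ((G x₁).1, List.ofFn fun j : Fin l => (G x₁).2 j) with hβ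
  have hcatν : ∀ z, wCat νs z = wCat ν₀ (listCat w z) := by
    intro z
    have := wCat_append c₀ [z0] w z
    simpa using this
  have hcatη : ∀ z, wCat ηs z = wCat η₀ (listCat w z) := by
    intro z
    have := wCat_append c₀ [z1] w z
    simpa using this
  have hΦconst : ∀ z : Cn n, Φ (listCat w z) = Φ x₁ := by
    intro z
    exact hm₁ _ (fun i hi => hagree z i (lt_of_lt_of_le hi hM1))
  have hΨconst : ∀ z : Cn n, Ψ (listCat w z) = Ψ x₁ := by
    intro z
    exact hm₂ _ (fun i hi => hagree z i (lt_of_lt_of_le hi hM2))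
  have hshift : ∀ (z : Cn n) (i : ℕ),
      (F (listCat w z)).2 (k + i) = (G (listCat w z)).2 (l + i) :=
    fun z => hAmem _ (fun i hi => hagree z i (lt_of_lt_of_le hi hM0))
  refine ⟨νs, ηs, ?_, ?_, ?_⟩
  · constructor
    · intro hsub
      have hmem := hsub (wCat_mem_cone ηs (fun _ => z0))
      have h1 := hmem.2 0 (by simp [hνs])
      have h2 : (wCat ηs (fun _ => z0)).2 0 = z1 := by simp [wCat, hηs]
      rw [h2] at h1
      simp [hνs] at h1
      exact hz01 h1.symm
    · intro hsub
      have hmem := hsub (wCat_mem_cone νs (fun _ => z0))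
      have h1 := hmem.2 0 (by simp [hηs])
      have h2 : (wCat νs (fun _ => z0)).2 0 = z0 := by simp [wCat, hνs]
      rw [h2] at h1
      simp [hηs] at h1
      exact hz01 h1
  · -- union is not everything
    have h0w : 0 < w.length := by omega
    set b : Fin n := if w.get ⟨0, h0w⟩ = z0 then z1 else z0 with hb
    have hbne : b ≠ w.get ⟨0, h0w⟩ := by
      rw [hb]; split
      · rename_i hcase; rw [hcase]; exact hz01.symm
      · rename_i hcase; exact fun hc => hcase hc.symm
    set q2 : Cn n := fun i => if i = 0 then z0 else if i = 1 then b else z0 with hq2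
    set q : CNR n r := (c₀, q2) with hq
    intro hU
    have hqmem : q ∈ cone νs ∪ cone ηs := hU ▸ mem_univ q
    cases hqmem with
    | inl hc =>
        have h1 := hc.2 1 (by simp [hνs]; omega)
        have h2 : q2 1 = b := by simp [hq2]
        rw [show q.2 = q2 from rfl, h2] at h1
        exact hbne h1
    | inr hc =>
        have h1 := hc.2 0 (by simp [hηs])
        have h2 : q2 0 = z0 := by simp [hq2]
        rw [show q.2 = q2 from rfl, h2] at h1
        exact hz01 h1
  · refine ⟨α, β, f, ?_, ?_⟩
    · intro z
      rw [hcatν z]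
      show F (listCat w z) = wCat α (f z)
      have hfst : (F (listCat w z)).1 = (F x₁).1 := (Prod.ext_iff.mp (hΦconst z)).1
      have hpref : ∀ j : Fin k, (F (listCat w z)).2 j = (F x₁).2 j :=
        fun j => congrFun (Prod.ext_iff.mp (hΦconst z)).2 j
      refine Prod.ext hfst ?_
      funext i
      simp only [wCat, hα, List.length_ofFn]
      by_cases hik : i < k
      · rw [dif_pos hik]
        have := hpref ⟨i, hik⟩
        exact this.trans (by simp [hα])
      · rw [dif_neg hik]
        show (F (listCat w z)).2 i = f z (i - k)
        simp only [hf]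
        rw [show k + (i - k) = i from by omega]
    · intro z
      rw [hcatη z]
      show G (listCat w z) = wCat β (f z)
      have hfst : (G (listCat w z)).1 = (G x₁).1 := (Prod.ext_iff.mp (hΨconst z)).1
      have hpref : ∀ j : Fin l, (G (listCat w z)).2 j = (G x₁).2 j :=
        fun j => congrFun (Prod.ext_iff.mp (hΨconst z)).2 j
      refine Prod.ext hfst ?_
      funext i
      simp only [wCat, hβ, List.length_ofFn]
      by_cases hil : i < l
      · rw [dif_pos hil]
        have := hpref ⟨i, hil⟩
        exact this.trans (by simp [hβ])
      · rw [dif_neg hil]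
        show (G (listCat w z)).2 i = f z (i - l)
        simp only [hf]
        rw [hshift z (i - l)]
        rw [show l + (i - l) = i from by omega]

end HigmanAut
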